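/- Let ε ∈ (0,1/9) and let v ∈ ℝ^m be a vector with at most 1/(9ε) nonzero entries and ‖v‖₂² = 1 ± ε. Set I = ⌈log₂(10/(9ε))⌉. Then there exists an integer i with 0 ≤ i ≤ I such that ∑_{k : |v_k|² ∈ [2^i ε, 2^{i+1} ε)} |v_k|² ≥ 7/(9(I+1)). -/

import Mathlib

lemma dyadic_idx (x : ℝ) (hx : 1 ≤ x) :
    ∃ i : ℕ, (2:ℝ)^i ≤ x ∧ x < 2^(i+1) := by
  have h0 : (1:ℕ) ≤ ⌊x⌋₊ := Nat.one_le_floor_iff x |>.mpr hx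
  refine ⟨Nat.log 2 ⌊x⌋₊, ?_, ?_⟩
  · have h1 : 2 ^ Nat.log 2 ⌊x⌋₊ ≤ ⌊x⌋₊ := Nat.pow_log_le_self 2 (by omega)
    calc (2:ℝ)^Nat.log 2 ⌊x⌋₊ = ((2 ^ Nat.log 2 ⌊x⌋₊ : ℕ) : ℝ) := by push_cast; ring
    _ ≤ (⌊x⌋₊ : ℝ) := by exact_mod_cast h1
    _ ≤ x := Nat.floor_le (by linarith)
  · have h2 : ⌊x⌋₊ < 2 ^ (Nat.log 2 ⌊x⌋₊ + 1) := Nat.lt_pow_succ_log_self (by norm_num) _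
    have h3 : x < (⌊x⌋₊ : ℝ) + 1 := Nat.lt_floor_add_one x
    have h4 : ((⌊x⌋₊ : ℕ) : ℝ) + 1 ≤ ((2 ^ (Nat.log 2 ⌊x⌋₊ + 1) : ℕ) : ℝ) := by
      exact_mod_cast h2
    calc x < (⌊x⌋₊ : ℝ) + 1 := h3
    _ ≤ ((2 ^ (Nat.log 2 ⌊x⌋₊ + 1) : ℕ) : ℝ) := h4
    _ = 2 ^ (Nat.log 2 ⌊x⌋₊ + 1) := by push_cast; ring

theorem stmt_6 (m : ℕ) (v : Fin m → ℝ) (ε : ℝ) (hε0 : 0 < ε) (hε1 : ε < 1/9)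
    (hsparse : (Nat.card {k : Fin m // v k ≠ 0} : ℝ) ≤ 1 / (9 * ε))
    (hnorm : |(∑ k : Fin m, (v k)^2) - 1| ≤ ε)
    (I : ℤ) (hI : I = ⌈Real.logb 2 (10 / (9 * ε))⌉) :
    ∃ i : ℕ, (i : ℤ) ≤ I ∧
      ∑ k ∈ Finset.univ.filter
          (fun k : Fin m => 2^i * ε ≤ (v k)^2 ∧ (v k)^2 < 2^(i+1) * ε), (v k)^2
        ≥ 7 / (9 * ((I : ℝ) + 1)) := by
  have habs := abs_le.mp hnorm
  have hx0 : (0:ℝ) < 10 / (9 * ε) := by positivity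
  -- I ≥ 1
  have hI1 : (1:ℤ) ≤ I := by
    rw [hI]
    have h2 : (2:ℝ) ≤ 10 / (9 * ε) := by
      rw [le_div_iff₀ (by positivity)]; linarith
    have h1 : (1:ℝ) ≤ Real.logb 2 (10 / (9 * ε)) := by
      calc (1:ℝ) = Real.logb 2 2 := (Real.logb_self_eq_one (by norm_num)).symm
      _ ≤ Real.logb 2 (10 / (9 * ε)) := Real.logb_le_logb_of_le (by norm_num) (by norm_num) h2
    calc (1:ℤ) = ⌈(1:ℝ)⌉ := by norm_num
    _ ≤ ⌈Real.logb 2 (10 / (9 * ε))⌉ := Int.ceil_le_ceil h1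
  set N : ℕ := I.toNat with hNdef
  have hN : (N : ℤ) = I := Int.toNat_of_nonneg (by linarith)
  have hNR : (N : ℝ) = (I : ℝ) := by exact_mod_cast hN
  -- 2^N ε ≥ 10/9
  have hpow : (10:ℝ) / 9 ≤ (2:ℝ)^N * ε := by
    have hlog : Real.logb 2 (10 / (9 * ε)) ≤ (I : ℝ) := by
      rw [hI]; exact Int.le_ceil _
    have h5 : 10 / (9 * ε) ≤ (2:ℝ) ^ N := by
      calc 10 / (9 * ε) = (2:ℝ) ^ (Real.logb 2 (10 / (9 * ε))) :=
            (Real.rpow_logb (by norm_num) (by norm_num) hx0).symm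
      _ ≤ (2:ℝ) ^ ((I:ℝ)) := Real.rpow_le_rpow_of_exponent_le (by norm_num) hlog
      _ = (2:ℝ) ^ N := by rw [← hNR, Real.rpow_natCast]
    rw [div_le_iff₀ (by positivity)] at h5
    nlinarith
  -- total sum bounds
  have hsum_le : ∑ k : Fin m, (v k)^2 ≤ 1 + ε := by linarith [habs.2]
  have hsum_ge : 1 - ε ≤ ∑ k : Fin m, (v k)^2 := by linarith [habs.1]
  -- each entry squared ≤ 1 + ε
  have hentry : ∀ k : Fin m, (v k)^2 ≤ 1 + ε := by
    intro k
    have h := Finset.single_le_sum (f := fun k => (v k)^2) (fun i _ => sq_nonneg _)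
      (Finset.mem_univ k)
    linarith
  -- the big set S
  set S : Finset (Fin m) := Finset.univ.filter (fun k => ε ≤ (v k)^2) with hS
  -- small entries total ≤ 1/9
  have hsmall : ∑ k ∈ Finset.univ.filter (fun k => ¬ ε ≤ (v k)^2), (v k)^2 ≤ 1/9 := by
    set A := Finset.univ.filter (fun k : Fin m => ¬ ε ≤ (v k)^2) with hA
    set nz := Finset.univ.filter (fun k : Fin m => v k ≠ 0) with hnz
    have hsub : ∑ k ∈ A, (v k)^2 = ∑ k ∈ A ∩ nz, (v k)^2 := by
      refine (Finset.sum_subset (Finset.inter_subset_left) ?_).symm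
      intro k hkA hk
      simp only [hnz, hA, Finset.mem_inter, Finset.mem_filter, Finset.mem_univ,
        true_and, not_and, not_not] at hk hkA
      have : v k = 0 := hk hkA
      simp [this]
    have hcard : ((nz.card : ℝ)) ≤ 1 / (9 * ε) := by
      have : Nat.card {k : Fin m // v k ≠ 0} = nz.card := by
        rw [Nat.card_eq_fintype_card, Fintype.card_subtype]
      rw [← this]; exact hsparse
    have hbound : ∑ k ∈ A ∩ nz, (v k)^2 ≤ ((A ∩ nz).card : ℝ) * ε := by
      rw [← nsmul_eq_mul]
      refine Finset.sum_le_card_nsmul _ _ _ ?_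
      intro k hk
      simp only [hA, Finset.mem_inter, Finset.mem_filter, Finset.mem_univ, true_and,
        not_le] at hk
      exact hk.1.le
    have hcard2 : ((A ∩ nz).card : ℝ) ≤ (nz.card : ℝ) := by
      exact_mod_cast Finset.card_le_card (Finset.inter_subset_right)
    calc ∑ k ∈ A, (v k)^2 = ∑ k ∈ A ∩ nz, (v k)^2 := hsub
    _ ≤ ((A ∩ nz).card : ℝ) * ε := hbound
    _ ≤ (nz.card : ℝ) * ε := by nlinarith
    _ ≤ (1 / (9 * ε)) * ε := by nlinarith
    _ = 1/9 := by field_simp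
  -- big mass ≥ 7/9
  have hbig : (7:ℝ)/9 ≤ ∑ k ∈ S, (v k)^2 := by
    have hsplit : ∑ k : Fin m, (v k)^2 =
        ∑ k ∈ S, (v k)^2 + ∑ k ∈ Finset.univ.filter (fun k => ¬ ε ≤ (v k)^2), (v k)^2 := by
      rw [hS]; exact (Finset.sum_filter_add_sum_filter_not _ _ _).symm
    linarith
  -- bands
  set band : ℕ → Finset (Fin m) := fun i => Finset.univ.filter
      (fun k : Fin m => 2^i * ε ≤ (v k)^2 ∧ (v k)^2 < 2^(i+1) * ε) with hband
  have hmem : ∀ k ∈ S, ∃ i ∈ Finset.range (N+1), k ∈ band i := by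
    intro k hk
    simp only [hS, Finset.mem_filter, Finset.mem_univ, true_and] at hk
    obtain ⟨i, hi1, hi2⟩ := dyadic_idx ((v k)^2 / ε) (by rw [le_div_iff₀ hε0]; linarith)
    rw [le_div_iff₀ hε0] at hi1
    rw [div_lt_iff₀ hε0] at hi2
    have hkb : (v k)^2 < 2^N * ε := by
      calc (v k)^2 ≤ 1 + ε := hentry k
      _ < 10/9 := by linarith
      _ ≤ 2^N * ε := hpow
    have hiN : i < N := by
      by_contra h
      push_neg at h
      have : (2:ℝ)^N ≤ 2^i := pow_le_pow_right₀ (by norm_num) h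
      nlinarith
    refine ⟨i, Finset.mem_range.mpr (by omega), ?_⟩
    simp only [hband, Finset.mem_filter, Finset.mem_univ, true_and]
    constructor <;> linarith
  have hdisj : ∀ i j : ℕ, i ≠ j → Disjoint (band i) (band j) := by
    have key : ∀ i j : ℕ, i < j → Disjoint (band i) (band j) := by
      intro i j hij
      rw [Finset.disjoint_left]
      intro k hki hkj
      simp only [hband, Finset.mem_filter, Finset.mem_univ, true_and] at hki hkj
      have hle : (2:ℝ)^(i+1) ≤ 2^j := pow_le_pow_right₀ (by norm_num) (by omega)
      nlinarith
    intro i j hij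
    rcases lt_or_gt_of_ne hij with h | h
    · exact key i j h
    · exact (key j i h).symm
  -- sum over bands ≥ 7/9
  have hunion : S ⊆ (Finset.range (N+1)).biUnion band := by
    intro k hk
    obtain ⟨i, hi, hki⟩ := hmem k hk
    exact Finset.mem_biUnion.mpr ⟨i, hi, hki⟩
  have hbandsum : (7:ℝ)/9 ≤ ∑ i ∈ Finset.range (N+1), ∑ k ∈ band i, (v k)^2 := by
    rw [← Finset.sum_biUnion (fun i _ j _ hij => hdisj i j hij)]
    refine le_trans hbig (Finset.sum_le_sum_of_subset_of_nonneg hunion ?_)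
    intro k _ _
    exact sq_nonneg _
  -- pigeonhole
  by_contra hcon
  push_neg at hcon
  have hlt : ∀ i ∈ Finset.range (N+1),
      ∑ k ∈ band i, (v k)^2 < 7 / (9 * ((I : ℝ) + 1)) := by
    intro i hi
    have hiI : (i : ℤ) ≤ I := by
      rw [← hN]
      exact_mod_cast Nat.lt_succ_iff.mp (Finset.mem_range.mp hi)
    exact hcon i hiI
  have hsumlt : ∑ i ∈ Finset.range (N+1), ∑ k ∈ band i, (v k)^2
      < ∑ _i ∈ Finset.range (N+1), 7 / (9 * ((I : ℝ) + 1)) :=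
    Finset.sum_lt_sum_of_nonempty (Finset.nonempty_range_add_one) hlt
  rw [Finset.sum_const, Finset.card_range, nsmul_eq_mul] at hsumlt
  have hIpos : (0:ℝ) < (I:ℝ) + 1 := by
    have : (1:ℝ) ≤ (I:ℝ) := by exact_mod_cast hI1
    linarith
  have : ((N:ℝ) + 1) * (7 / (9 * ((I : ℝ) + 1))) = 7/9 := by
    rw [hNR]; field_simp
  push_cast at hsumlt
  rw [hNR] at hsumlt
  nlinarith [hsumlt, hbandsum]
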